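/- Let 𝒞(x) = (x+1)·ln(x+1) − x and let a ≥ 0. If b ≥ 1, then b·𝒞(a) ≤ 𝒞(a·b) ≤ b²·𝒞(a). If 0 ≤ b ≤ 1, then b²·𝒞(a) ≤ 𝒞(a·b) ≤ b·𝒞(a). -/

import Mathlib

open Real

noncomputable section

/-- The Bennett function `𝒞(x) = (x+1)·ln(x+1) − x`. -/
def bennett (x : ℝ) : ℝ := (x + 1) * Real.log (x + 1) - x

lemma bennett_hasDerivAt {x : ℝ} (hx : -1 < x) :
    HasDerivAt bennett (Real.log (x + 1)) x := by
  have h1 : x + 1 ≠ 0 := by linarith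
  have h : HasDerivAt (fun y : ℝ => (y + 1) * Real.log (y + 1) - y)
      (1 * Real.log (x + 1) + (x + 1) * ((x + 1)⁻¹ * 1) - 1) x := by
    exact (((hasDerivAt_id x).add_const 1).mul
      (((Real.hasDerivAt_log h1).comp x ((hasDerivAt_id x).add_const 1)))).sub (hasDerivAt_id x)
  have : (1 * Real.log (x + 1) + (x + 1) * ((x + 1)⁻¹ * 1) - 1) = Real.log (x + 1) := by
    field_simp
    ring
  rw [this] at h
  exact h

lemma bennett_zero : bennett 0 = 0 := by simp [bennett]

lemma nonneg_of_deriv (f f' : ℝ → ℝ) (hf : ∀ x, 0 ≤ x → HasDerivAt f (f' x) x)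
    (hf' : ∀ x, 0 ≤ x → 0 ≤ f' x) (h0 : f 0 = 0) {a : ℝ} (ha : 0 ≤ a) : 0 ≤ f a := by
  have hmono : MonotoneOn f (Set.Ici (0 : ℝ)) := by
    apply monotoneOn_of_deriv_nonneg (convex_Ici 0)
    · exact fun x hx => (hf x hx).continuousAt.continuousWithinAt
    · intro x hx
      rw [interior_Ici] at hx
      exact (hf x (le_of_lt hx)).differentiableAt.differentiableWithinAt
    · intro x hx
      rw [interior_Ici] at hx
      rw [(hf x (le_of_lt hx)).deriv]
      exact hf' x (le_of_lt hx)
  calc (0 : ℝ) = f 0 := h0.symm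
    _ ≤ f a := hmono (Set.self_mem_Ici) (Set.mem_Ici.2 ha) ha

lemma scaled_hasDerivAt {b x : ℝ} (hb : 0 ≤ b) (hx : 0 ≤ x) :
    HasDerivAt (fun a => bennett (a * b)) (Real.log (x * b + 1) * b) x := by
  exact (bennett_hasDerivAt (by nlinarith)).comp x (hasDerivAt_mul_const b)

/-- Scaling estimates for the Bennett function: for `a ≥ 0`,
if `b ≥ 1` then `b·𝒞(a) ≤ 𝒞(a·b) ≤ b²·𝒞(a)`, and if `0 ≤ b ≤ 1` then
`b²·𝒞(a) ≤ 𝒞(a·b) ≤ b·𝒞(a)`. -/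
theorem bennett_scaling (a b : ℝ) (ha : 0 ≤ a) :
    (1 ≤ b → b * bennett a ≤ bennett (a * b) ∧ bennett (a * b) ≤ b ^ 2 * bennett a) ∧
    (0 ≤ b → b ≤ 1 → b ^ 2 * bennett a ≤ bennett (a * b) ∧ bennett (a * b) ≤ b * bennett a) := by
  constructor
  · intro hb
    have hb0 : (0:ℝ) ≤ b := by linarith
    constructor
    · have := nonneg_of_deriv (fun a => bennett (a * b) - b * bennett a)
        (fun x => Real.log (x * b + 1) * b - b * Real.log (x + 1))
        (fun x hx => (scaled_hasDerivAt hb0 hx).sub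
          ((bennett_hasDerivAt (by linarith)).const_mul b))
        (fun x hx => by
          show (0:ℝ) ≤ _
          have h1 : Real.log (x + 1) ≤ Real.log (x * b + 1) :=
            Real.log_le_log (by linarith) (by nlinarith)
          nlinarith)
        (by simp [bennett_zero]) ha
      linarith
    · have := nonneg_of_deriv (fun a => b ^ 2 * bennett a - bennett (a * b))
        (fun x => b ^ 2 * Real.log (x + 1) - Real.log (x * b + 1) * b)
        (fun x hx => ((bennett_hasDerivAt (by linarith)).const_mul (b ^ 2)).sub
          (scaled_hasDerivAt hb0 hx))
        (fun x hx => by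
          show (0:ℝ) ≤ _
          have hbern : 1 + b * x ≤ (1 + x) ^ b :=
            one_add_mul_self_le_rpow_one_add (by linarith) hb
          have h1 : Real.log (x * b + 1) ≤ b * Real.log (x + 1) := by
            have := Real.log_le_log (by nlinarith) (by linarith [hbern] : x * b + 1 ≤ (1 + x) ^ b)
            rwa [Real.log_rpow (by linarith), add_comm (1:ℝ) x] at this
          nlinarith)
        (by simp [bennett_zero]) ha
      linarith
  · intro hb0 hb1
    constructor
    · have := nonneg_of_deriv (fun a => bennett (a * b) - b ^ 2 * bennett a)
        (fun x => Real.log (x * b + 1) * b - b ^ 2 * Real.log (x + 1))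
        (fun x hx => (scaled_hasDerivAt hb0 hx).sub
          ((bennett_hasDerivAt (by linarith)).const_mul (b ^ 2)))
        (fun x hx => by
          show (0:ℝ) ≤ _
          have hbern : (1 + x) ^ b ≤ 1 + b * x :=
            rpow_one_add_le_one_add_mul_self (by linarith) hb0 hb1
          have h1 : b * Real.log (x + 1) ≤ Real.log (x * b + 1) := by
            have h2 : (0:ℝ) < (1 + x) ^ b := Real.rpow_pos_of_pos (by linarith) b
            have := Real.log_le_log h2 (by linarith [hbern] : (1 + x) ^ b ≤ x * b + 1)
            rwa [Real.log_rpow (by linarith), add_comm (1:ℝ) x] at this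
          nlinarith)
        (by simp [bennett_zero]) ha
      linarith
    · have := nonneg_of_deriv (fun a => b * bennett a - bennett (a * b))
        (fun x => b * Real.log (x + 1) - Real.log (x * b + 1) * b)
        (fun x hx => ((bennett_hasDerivAt (by linarith)).const_mul b).sub
          (scaled_hasDerivAt hb0 hx))
        (fun x hx => by
          show (0:ℝ) ≤ _
          have h1 : Real.log (x * b + 1) ≤ Real.log (x + 1) :=
            Real.log_le_log (by nlinarith) (by nlinarith)
          nlinarith)
        (by simp [bennett_zero]) ha
      linarith
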